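/- Let U be a unitary operator on ℂ^m. Then there exists a constant C ≥ 0, depending only on U, such that for all φ, φ̇ ∈ ℂ^m satisfying the boundary condition φ − iφ̇ = U(φ + iφ̇), one has |⟨φ, φ̇⟩| ≤ C ‖φ‖². -/

import Mathlib

open scoped ComplexInnerProductSpace

theorem aux_bdd_below {F G : Type*} [NormedAddCommGroup F] [NormedSpace ℂ F]
    [NormedAddCommGroup G] [NormedSpace ℂ G] [FiniteDimensional ℂ F]
    (f : F →ₗ[ℂ] G) (hf : Function.Injective f) :
    ∃ c : ℝ, 0 ≤ c ∧ ∀ x, ‖x‖ ≤ c * ‖f x‖ := by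
  let e : F ≃ₗ[ℂ] LinearMap.range f := LinearEquiv.ofInjective f hf
  let e' : F ≃L[ℂ] LinearMap.range f := e.toContinuousLinearEquiv
  have hK := e'.antilipschitz
  obtain ⟨c, hc⟩ : ∃ c : NNReal, AntilipschitzWith c e' := ⟨_, hK⟩
  refine ⟨c, NNReal.coe_nonneg _, fun x => ?_⟩
  have h := hc.le_mul_dist x 0
  rw [map_zero, dist_zero_right, dist_zero_right] at h
  have hnorm : ‖e' x‖ = ‖f x‖ := by
    have : ((e' x : G)) = f x := by rfl
    rw [← this]; simp
  rwa [hnorm] at h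

/-- For a unitary operator `U` on `ℂ^m` there is a constant `C ≥ 0` such that every pair
`(φ, φ̇)` satisfying the boundary condition `φ - iφ̇ = U(φ + iφ̇)` obeys
`|⟪φ, φ̇⟫| ≤ C ‖φ‖²`. -/
theorem stmt_8 (m : ℕ)
    (U : EuclideanSpace ℂ (Fin m) ≃ₗᵢ[ℂ] EuclideanSpace ℂ (Fin m)) :
    ∃ C : ℝ, 0 ≤ C ∧ ∀ φ φd : EuclideanSpace ℂ (Fin m),
      φ - Complex.I • φd = U (φ + Complex.I • φd) →
      ‖⟪φ, φd⟫‖ ≤ C * ‖φ‖ ^ 2 := by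
  set E := EuclideanSpace ℂ (Fin m)
  set A : E →ₗ[ℂ] E := U.toLinearEquiv.toLinearMap + LinearMap.id with hA
  set K : Submodule ℂ E := LinearMap.ker A with hKdef
  have hAapp : ∀ x : E, A x = U x + x := fun x => rfl
  -- restriction of A to Kᗮ is injective
  have hBinj : Function.Injective (A.domRestrict Kᗮ) := by
    rw [← LinearMap.ker_eq_bot, Submodule.eq_bot_iff]
    rintro ⟨x, hx⟩ hx0
    have hxA : A x = 0 := by simpa [LinearMap.domRestrict_apply] using hx0
    have hxK : x ∈ K := hxA
    have hx0' : x = 0 := by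
      have h1 : ⟪x, x⟫ = (0 : ℂ) := (Submodule.mem_orthogonal K x).mp hx x hxK
      exact inner_self_eq_zero.mp h1
    simpa using hx0'
  obtain ⟨c, hc0, hc⟩ := aux_bdd_below (A.domRestrict Kᗮ) hBinj
  refine ⟨2 * c + 1, by positivity, fun φ φd hbc => ?_⟩
  set ψ : E := φ + Complex.I • φd with hψdef
  set ψ₀ : E := (K.orthogonalProjection ψ : E) with hψ₀def
  set ψ₁ : E := ψ - ψ₀ with hψ₁def
  have hψ₀K : ψ₀ ∈ K := (K.orthogonalProjection ψ).2
  have hψ₁mem : ψ₁ ∈ Kᗮ := Submodule.sub_starProjection_mem_orthogonal (K := K) ψ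
  have hAψ : A ψ = (2 : ℂ) • φ := by
    rw [hAapp, hψdef, ← hbc]
    module
  have hAψ₀ : A ψ₀ = 0 := hψ₀K
  have hAψ₁ : A ψ₁ = (2 : ℂ) • φ := by
    rw [hψ₁def, map_sub, hAψ₀, hAψ, sub_zero]
  have hUψ₀ : U ψ₀ = -ψ₀ := by
    have := hAapp ψ₀
    rw [hAψ₀] at this
    linear_combination (norm := module) -this
  have hn : ‖ψ₁‖ ≤ c * (2 * ‖φ‖) := by
    have h := hc ⟨ψ₁, hψ₁mem⟩
    simp only [LinearMap.domRestrict_apply, Submodule.coe_norm] at h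
    calc ‖ψ₁‖ ≤ c * ‖A ψ₁‖ := h
      _ = c * (2 * ‖φ‖) := by rw [hAψ₁, norm_smul]; norm_num
  have h1 : ⟪ψ₁, ψ₀⟫ = (0 : ℂ) := by
    rw [inner_eq_zero_symm]
    exact (Submodule.mem_orthogonal K ψ₁).mp hψ₁mem ψ₀ hψ₀K
  have h2 : ⟪U ψ₁, ψ₀⟫ = (0 : ℂ) := by
    have hψ₀' : ψ₀ = U (-ψ₀) := by rw [map_neg, hUψ₀, neg_neg]
    calc ⟪U ψ₁, ψ₀⟫ = ⟪U ψ₁, U (-ψ₀)⟫ := by rw [← hψ₀']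
      _ = ⟪ψ₁, -ψ₀⟫ := U.inner_map_map ψ₁ (-ψ₀)
      _ = 0 := by rw [inner_neg_right, h1, neg_zero]
  have hφψ₀ : ⟪φ, ψ₀⟫ = (0 : ℂ) := by
    have h3 : ⟪A ψ₁, ψ₀⟫ = (0 : ℂ) := by
      rw [hAapp, inner_add_left, h1, h2, add_zero]
    rw [hAψ₁, inner_smul_left] at h3
    have : (starRingEnd ℂ) (2 : ℂ) ≠ 0 := by norm_num
    exact (mul_eq_zero.mp h3).resolve_left this
  have hkey : ⟪φ, ψ - φ⟫ = Complex.I * ⟪φ, φd⟫ := by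
    have : ψ - φ = Complex.I • φd := by rw [hψdef]; abel
    rw [this, inner_smul_right]
  have habs : ‖⟪φ, φd⟫‖ = ‖⟪φ, ψ - φ⟫‖ := by
    rw [hkey, norm_mul]
    simp
  have hsplit : ⟪φ, ψ - φ⟫ = ⟪φ, ψ₁ - φ⟫ := by
    have : ψ - φ = ψ₀ + (ψ₁ - φ) := by rw [hψ₁def]; abel
    rw [this, inner_add_right, hφψ₀, zero_add]
  have hb : ‖⟪φ, ψ₁ - φ⟫‖ ≤ ‖φ‖ * (c * (2 * ‖φ‖) + ‖φ‖) := by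
    calc ‖⟪φ, ψ₁ - φ⟫‖ = ‖⟪φ, ψ₁ - φ⟫‖ := rfl
      _ ≤ ‖φ‖ * ‖ψ₁ - φ‖ := norm_inner_le_norm φ (ψ₁ - φ)
      _ ≤ ‖φ‖ * (‖ψ₁‖ + ‖φ‖) := by
          gcongr
          exact norm_sub_le ψ₁ φ
      _ ≤ ‖φ‖ * (c * (2 * ‖φ‖) + ‖φ‖) := by
          gcongr
  rw [habs, hsplit]
  calc ‖⟪φ, ψ₁ - φ⟫‖ ≤ ‖φ‖ * (c * (2 * ‖φ‖) + ‖φ‖) := hb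
    _ = (2 * c + 1) * ‖φ‖ ^ 2 := by ring
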